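/- Let f : A → B be an (n, m, S) zero-difference function with λ = max S, giving the code C_f = {(f(a_0 + a_i), ..., f(a_{n-1} + a_i)) : 0 ≤ i ≤ n-1} over B, which is an (n, n, n-λ, [w_0, ..., w_{m-1}]) constant composition code. If C_f meets the bound n = nd/(nd - n² + Σ_i w_i²) with d = n - λ (i.e., C_f is optimal), then S = {λ}, i.e., f is zero-difference balanced. -/

import Mathlib

open Finset

theorem stmt11 {A B : Type*} [AddCommGroup A] [Fintype A] [DecidableEq A]
    [Fintype B] [DecidableEq B] (f : A → B)
    (n lam : ℕ) (hn : n = Fintype.card A) (hn2 : 2 ≤ n)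
    (hmax : ∀ α : A, α ≠ 0 → (univ.filter fun x => f (x + α) = f x).card ≤ lam)
    (hmem : ∃ α : A, α ≠ 0 ∧ (univ.filter fun x => f (x + α) = f x).card = lam)
    (W : ℚ) (hW : W = ∑ b ∈ univ.image f, ((univ.filter fun x => f x = b).card : ℚ) ^ 2)
    (hpos : (n : ℚ) * ((n : ℚ) - lam) - (n : ℚ) ^ 2 + W > 0)
    (hopt : (n : ℚ) = (n : ℚ) * ((n : ℚ) - lam)
        / ((n : ℚ) * ((n : ℚ) - lam) - (n : ℚ) ^ 2 + W)) :
    ∀ α : A, α ≠ 0 → (univ.filter fun x => f (x + α) = f x).card = lam := by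
  set g : A → ℕ := fun α => (univ.filter fun x => f (x + α) = f x).card with hg
  -- counting identity
  have key : ∑ α : A, g α = ∑ b ∈ univ.image f, (univ.filter fun x => f x = b).card ^ 2 := by
    have h1 : ∀ x : A, (univ.filter fun α => f (x + α) = f x).card
        = (univ.filter fun y => f y = f x).card := by
      intro x
      apply Finset.card_bij (fun α _ => x + α)
      · intro α hα; simp only [mem_filter, mem_univ, true_and] at hα ⊢; exact hα
      · intro a ha b hb hab; exact add_left_cancel hab
      · intro y hy; refine ⟨-x + y, ?_, by abel⟩
        simp only [mem_filter, mem_univ, true_and] at hy ⊢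
        simpa using hy
    calc ∑ α : A, g α = ∑ α : A, ∑ x : A, if f (x + α) = f x then 1 else 0 := by
          simp only [hg, Finset.card_filter]
      _ = ∑ x : A, ∑ α : A, if f (x + α) = f x then 1 else 0 := Finset.sum_comm
      _ = ∑ x : A, (univ.filter fun α => f (x + α) = f x).card := by
          simp only [Finset.card_filter]
      _ = ∑ x : A, (univ.filter fun y => f y = f x).card := by
          exact Finset.sum_congr rfl fun x _ => h1 x
      _ = ∑ b ∈ univ.image f, (univ.filter fun x => f x = b).card ^ 2 := by
          rw [Finset.sum_comp (fun b => (univ.filter fun y => f y = b).card) f]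
          exact Finset.sum_congr rfl fun b _ => by rw [smul_eq_mul, sq]
  have hg0 : g 0 = n := by
    have h0 : (univ.filter fun x => f (x + 0) = f x) = univ := by ext x; simp
    show (univ.filter fun x => f (x + 0) = f x).card = n
    rw [h0, Finset.card_univ, ← hn]
  have hnQ : (n : ℚ) ≠ 0 := by positivity
  -- from optimality: denominator equals d
  have hD : (n : ℚ) * ((n : ℚ) - lam) - (n : ℚ) ^ 2 + W = (n : ℚ) - lam := by
    have := hopt
    rw [eq_div_iff (ne_of_gt hpos)] at this
    exact mul_left_cancel₀ hnQ this
  have hWval : W = (n : ℚ) - lam + (n : ℚ) ^ 2 - (n : ℚ) * ((n : ℚ) - lam) := by linarith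
  -- sum over nonzero α
  have hsumQ : ((∑ α ∈ univ.erase (0 : A), g α : ℕ) : ℚ) = ((n : ℚ) - 1) * lam := by
    have hsplit : ∑ α : A, g α = g 0 + ∑ α ∈ univ.erase (0 : A), g α := by
      rw [← Finset.sum_erase_add _ _ (mem_univ (0 : A))]; ring
    have hWnat : ((∑ α : A, g α : ℕ) : ℚ) = W := by
      rw [key, hW]; push_cast; ring
    have : ((g 0 : ℚ)) + ((∑ α ∈ univ.erase (0 : A), g α : ℕ) : ℚ) = W := by
      rw [← hWnat, hsplit]; push_cast; ring
    rw [hg0] at this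
    rw [hWval] at this
    ring_nf
    ring_nf at this
    linarith
  have hcard : (univ.erase (0 : A)).card = n - 1 := by
    rw [Finset.card_erase_of_mem (mem_univ _), Finset.card_univ, ← hn]
  have hsum : ∑ α ∈ univ.erase (0 : A), g α = (n - 1) * lam := by
    have : ((∑ α ∈ univ.erase (0 : A), g α : ℕ) : ℚ) = (((n - 1) * lam : ℕ) : ℚ) := by
      rw [hsumQ]; push_cast [Nat.cast_sub (by omega : 1 ≤ n)]; ring
    exact_mod_cast this
  have hconst : ∑ α ∈ univ.erase (0 : A), g α = ∑ _α ∈ univ.erase (0 : A), lam := by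
    rw [hsum, Finset.sum_const, hcard, smul_eq_mul]
  have hle : ∀ α ∈ univ.erase (0 : A), g α ≤ lam := by
    intro α hα; exact hmax α (Finset.ne_of_mem_erase hα)
  intro α hα
  exact (Finset.sum_eq_sum_iff_of_le hle).mp hconst α (by simp [hα])
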